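/- arXiv:math-ph/0505012 — 2 statements merged into one kernel-verified Lean document; each statement's English description precedes it below -/
import Mathlib

section
/- Let B, D, P be elements of a Banach algebra with ‖B‖ < 1 and DB = -BD - P. Then ∑_{n≥1} (-1)^n ∑_{k=0}^{n-1} B^k D B^{n-k} = (1 - B²)^{-1} B D + (1 - B²)^{-1} P (1 + B)^{-1}, where the series converges absolutely. -/
set_option maxHeartbeats 1000000 in
/-- Algebraic core of Lemma 2: in a Banach algebra with `‖B‖ < 1` and `DB = -BD - P`,
the series `∑_{n≥1} (-1)^n ∑_{k=0}^{n-1} B^k D B^{n-k}` converges absolutely and equals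
`(1-B²)⁻¹ B D + (1-B²)⁻¹ P (1+B)⁻¹`. -/
theorem stmt_3 {A : Type*} [NormedRing A] [CompleteSpace A] (B D P : A)
    (hB : ‖B‖ < 1) (h : D * B = -(B * D) - P) :
    Summable (fun n : ℕ =>
      ‖(-1:A) ^ (n+1) * ∑ k ∈ Finset.range (n+1), B ^ k * D * B ^ (n+1-k)‖) ∧
    (∑' n : ℕ, (-1:A) ^ (n+1) * ∑ k ∈ Finset.range (n+1), B ^ k * D * B ^ (n+1-k))
      = Ring.inverse (1 - B ^ 2) * B * D
        + Ring.inverse (1 - B ^ 2) * P * Ring.inverse (1 + B) := by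
  have hf : ∀ i : ℕ, (if Even i then B ^ i else 0) = (if Even i then B ^ i else 0) := fun _ => rfl
  set f : ℕ → A := fun i => if Even i then B ^ i else 0 with hfdef
  have hB2 : ‖B ^ 2‖ < 1 := by
    calc ‖B ^ 2‖ ≤ ‖B‖ ^ 2 := norm_pow_le' B two_pos
    _ < 1 := pow_lt_one₀ (norm_nonneg B) hB (by norm_num)
  have hnB : ‖-B‖ < 1 := by simpa using hB
  have hkey : ∀ m : ℕ, B ^ m * D * B = -(B ^ (m+1) * D) - B ^ m * P := by
    intro m
    rw [mul_assoc, h, mul_sub, mul_neg, ← mul_assoc, ← pow_succ]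
  have Srec : ∀ n : ℕ, (∑ k ∈ Finset.range (n+2), B ^ k * D * B ^ (n+2-k))
      = (∑ k ∈ Finset.range (n+1), B ^ k * D * B ^ (n+1-k)) * B + B ^ (n+1) * D * B := by
    intro n
    rw [Finset.sum_range_succ, Finset.sum_mul]
    congr 1
    · refine Finset.sum_congr rfl fun k hk => ?_
      have hk' : k < n + 1 := Finset.mem_range.mp hk
      have hnk : n + 2 - k = (n + 1 - k) + 1 := by omega
      rw [hnk, pow_succ, ← mul_assoc]
    · have hnn : n + 2 - (n + 1) = 1 := by omega
      rw [hnn, pow_one]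
  have hterm : ∀ n : ℕ,
      (-1:A) ^ (n+1) * ∑ k ∈ Finset.range (n+1), B ^ k * D * B ^ (n+1-k)
      = f n * (B * D) + ∑ i ∈ Finset.range (n+1), f i * (P * (-B) ^ (n-i)) := by
    intro n
    induction n with
    | zero =>
      have e0 : (-1:A) ^ (0+1) * ∑ k ∈ Finset.range (0+1), B ^ k * D * B ^ (0+1-k)
          = -(D * B) := by simp
      rw [e0, h]
      simp only [hfdef, Even.zero, if_pos, pow_zero, one_mul, Finset.sum_range_succ,
        Finset.sum_range_zero, zero_add, Nat.sub_self, mul_one, neg_sub]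
      abel
    | succ n ih =>
      have hTsucc : (-1:A) ^ (n+1+1) * ∑ k ∈ Finset.range (n+2), B ^ k * D * B ^ (n+2-k)
          = -(((-1:A) ^ (n+1) * ∑ k ∈ Finset.range (n+1), B ^ k * D * B ^ (n+1-k)) * B)
            + (-1:A) ^ (n+1) * (-(-(B ^ (n+2) * D) - B ^ (n+1) * P)) := by
        rw [Srec n, hkey (n+1)]
        have hpow : ((-1:A) ^ (n+1+1)) = -((-1:A) ^ (n+1)) := by
          rw [pow_succ, mul_neg_one]
        rw [hpow]
        simp only [neg_mul, mul_add, mul_neg, neg_add, mul_assoc]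
      rw [hTsucc, ih]
      rw [Finset.sum_range_succ (fun i => f i * (P * (-B) ^ (n+1-i)))]
      have hsum : (∑ i ∈ Finset.range (n+1), f i * (P * (-B) ^ (n-i))) * B
          = -∑ i ∈ Finset.range (n+1), f i * (P * (-B) ^ (n+1-i)) := by
        rw [Finset.sum_mul, ← Finset.sum_neg_distrib]
        apply Finset.sum_congr rfl
        intro i hi
        have hi' : i < n + 1 := Finset.mem_range.mp hi
        have hexp : n + 1 - i = (n - i) + 1 := by omega
        rw [hexp, pow_succ]
        simp only [mul_assoc, mul_neg, neg_mul, neg_neg]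
      rcases Nat.even_or_odd n with he | ho
      · have h1 : f n = B ^ n := by simp [hfdef, he]
        have h2 : f (n+1) = 0 := by simp [hfdef, Nat.even_add_one, he]
        have h3 : ((-1:A) ^ (n+1)) = -1 := by
          rw [pow_succ, he.neg_one_pow, one_mul]
        rw [h1, h2, h3]
        have h4 : B ^ n * (B * D) * B = -(B ^ (n+2) * D) - B ^ (n+1) * P := by
          have e1 : B ^ n * (B * D) * B = B ^ (n+1) * D * B := by
            rw [pow_succ, mul_assoc (B ^ n) B D]
          rw [e1, hkey (n+1)]
        rw [add_mul, h4, hsum]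
        simp only [zero_mul, zero_add, add_zero, neg_one_mul, neg_neg, neg_add]
        abel
      · have h1 : f n = 0 := by simp [hfdef, Nat.not_even_iff_odd.mpr ho]
        have h2 : f (n+1) = B ^ (n+1) := by
          simp [hfdef, Nat.even_add_one, Nat.not_even_iff_odd.mpr ho]
        have h3 : ((-1:A) ^ (n+1)) = 1 := by
          rw [pow_succ, Odd.neg_one_pow ho]; simp
        rw [h1, h2, h3]
        rw [add_mul, hsum]
        simp only [zero_mul, Nat.sub_self, pow_zero, mul_one, one_mul, zero_add, neg_neg,
          neg_add, pow_succ, mul_assoc]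
        abel
  -- summability
  have hnormpow : Summable fun n : ℕ => ‖B ^ n‖ := summable_norm_geometric_of_norm_lt_one hB
  have hsf : Summable fun i => ‖f i‖ := by
    apply Summable.of_nonneg_of_le (fun i => norm_nonneg _) _ hnormpow
    intro i
    by_cases hi : Even i <;> simp [hfdef, hi]
  have hnormneg : ∀ m : ℕ, ‖(-B) ^ m‖ = ‖B ^ m‖ := by
    intro m
    rcases Nat.even_or_odd m with he | ho
    · rw [he.neg_pow]
    · rw [ho.neg_pow, norm_neg]
  have hsg : Summable fun m => ‖P * (-B) ^ m‖ := by
    apply Summable.of_nonneg_of_le (fun m => norm_nonneg _) _ (hnormpow.mul_left ‖P‖)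
    intro m
    calc ‖P * (-B) ^ m‖ ≤ ‖P‖ * ‖(-B) ^ m‖ := norm_mul_le _ _
    _ = ‖P‖ * ‖B ^ m‖ := by rw [hnormneg]
  have hcauchy : Summable fun n => ‖∑ k ∈ Finset.range (n+1), f k * (P * (-B) ^ (n-k))‖ :=
    summable_norm_sum_mul_range_of_summable_norm (f := f) (g := fun m => P * (-B) ^ m) hsf hsg
  have hfirst : Summable fun n => ‖f n * (B * D)‖ :=
    Summable.of_nonneg_of_le (fun n => norm_nonneg _) (fun n => norm_mul_le _ _)
      (hsf.mul_right ‖B * D‖)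
  have hsumT : Summable (fun n : ℕ =>
      ‖(-1:A) ^ (n+1) * ∑ k ∈ Finset.range (n+1), B ^ k * D * B ^ (n+1-k)‖) := by
    apply Summable.of_nonneg_of_le (fun n => norm_nonneg _) _ (hfirst.add hcauchy)
    intro n
    rw [hterm n]
    exact norm_add_le _ _
  refine ⟨hsumT, ?_⟩
  have hfv : ∑' i, f i = Ring.inverse (1 - B ^ 2) := by
    have hinj : Function.Injective (fun m : ℕ => 2 * m) := fun a b hab => by
      dsimp at hab; omega
    have h0 : Function.support f ⊆ Set.range (fun m : ℕ => 2 * m) := by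
      intro x hx
      rcases Nat.even_or_odd x with he | ho
      · obtain ⟨r, hr⟩ := he
        exact ⟨r, by dsimp; omega⟩
      · exact absurd (by simp [hfdef, Nat.not_even_iff_odd.mpr ho]) hx
    rw [← hinj.tsum_eq h0]
    have hfe : ∀ m : ℕ, f (2 * m) = (B ^ 2) ^ m := by
      intro m
      simp [hfdef, even_two_mul, pow_mul]
    rw [tsum_congr hfe]
    exact geom_series_eq_inverse (B ^ 2) hB2
  have hgv : ∑' m : ℕ, P * (-B) ^ m = P * Ring.inverse (1 + B) := by
    rw [(summable_geometric_of_norm_lt_one hnB).tsum_mul_left P]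
    rw [geom_series_eq_inverse (-B) hnB, sub_neg_eq_add]
  calc (∑' n : ℕ, (-1:A) ^ (n+1) * ∑ k ∈ Finset.range (n+1), B ^ k * D * B ^ (n+1-k))
      = ∑' n : ℕ, (f n * (B * D) + ∑ i ∈ Finset.range (n+1), f i * (P * (-B) ^ (n-i))) :=
        tsum_congr hterm
    _ = (∑' n, f n * (B * D)) + ∑' n, ∑ i ∈ Finset.range (n+1), f i * (P * (-B) ^ (n-i)) :=
        (hfirst.of_norm.hasSum.add hcauchy.of_norm.hasSum).tsum_eq
    _ = (∑' n, f n) * (B * D) + (∑' n, f n) * (∑' m : ℕ, P * (-B) ^ m) := by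
        rw [Summable.tsum_mul_right (B * D) hsf.of_norm, ← tsum_mul_tsum_eq_tsum_sum_range_of_summable_norm (f := f) (g := fun m => P * (-B) ^ m) hsf hsg]
    _ = Ring.inverse (1 - B ^ 2) * B * D + Ring.inverse (1 - B ^ 2) * P * Ring.inverse (1 + B) := by
        rw [hfv, hgv]
        simp only [mul_assoc]
end

section
/- Let B(s) be a family of elements of a Banach algebra, differentiable in s, with ‖B(s)‖ < 1, satisfying B'(s) = D B(s) for a fixed element D and D B(s) = -B(s) D - P(s) where P(s) = B(s) Q for some rank-one-like element Q. Then d/ds (1 + B(s))^{-1} = (1 - B(s)²)^{-1} B(s) D + (1 - B(s)²)^{-1} P(s) (1 + B(s))^{-1}. -/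
/-- Abstract Banach-algebra version of Lemma 2: if `B'(s) = D B(s)`,
`D B(s) = -B(s) D - P(s)` with `P(s) = B(s) Q`, and `‖B(s)‖ < 1`, then
`d/ds (1+B(s))⁻¹ = (1-B(s)²)⁻¹ B(s) D + (1-B(s)²)⁻¹ P(s) (1+B(s))⁻¹`. -/
theorem stmt_14 {A : Type*} [NormedRing A] [NormedAlgebra ℝ A] [CompleteSpace A]
    (B P : ℝ → A) (D Q : A)
    (hderiv : ∀ s, HasDerivAt B (D * B s) s)
    (hP : ∀ s, P s = B s * Q)
    (hcomm : ∀ s, D * B s = -(B s * D) - P s)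
    (hB : ∀ s, ‖B s‖ < 1) (s : ℝ) :
    HasDerivAt (fun t => Ring.inverse (1 + B t))
      (Ring.inverse (1 - (B s) ^ 2) * (B s) * D
        + Ring.inverse (1 - (B s) ^ 2) * P s * Ring.inverse (1 + B s)) s := by
  have hneg : ‖-(B s)‖ < 1 := by simpa using hB s
  set u : Aˣ := Units.oneSub (-(B s)) hneg with hu_def
  have hu : (u : A) = 1 + B s := by simp [hu_def, sub_neg_eq_add]
  set v : Aˣ := Units.oneSub (B s) (hB s) with hv_def
  have hv : (v : A) = 1 - B s := by simp [hv_def]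
  set a : A := ↑u⁻¹ with ha_def
  set c : A := ↑v⁻¹ with hc_def
  -- the unit for 1 - B s ^ 2
  have hw : ((u * v : Aˣ) : A) = 1 - (B s) ^ 2 := by
    rw [Units.val_mul, hu, hv]; noncomm_ring
  have hinv2 : Ring.inverse (1 - (B s) ^ 2) = c * a := by
    rw [← hw, Ring.inverse_unit, mul_inv_rev, Units.val_mul]
  have hinva : Ring.inverse (1 + B s) = a := by
    rw [← hu, Ring.inverse_unit]
  -- derivative via Fréchet derivative of Ring.inverse
  have hf : HasDerivAt (fun t => (1 : A) + B t) (D * B s) s :=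
    (hderiv s).const_add 1
  have hd : HasDerivAt (fun t => Ring.inverse (1 + B t))
      (-(a * (D * B s) * a)) s := by
    have := (hasFDerivAt_ringInverse (𝕜 := ℝ) u).comp_hasDerivAt_of_eq s hf hu
    simpa [ContinuousLinearMap.mulLeftRight_apply, Function.comp_def] using this
  convert hd using 1
  -- now pure algebra
  have hua : a * (1 + B s) = 1 := by rw [← hu]; exact u.inv_mul
  have hau : (1 + B s) * a = 1 := by rw [← hu]; exact u.mul_inv
  have hvc : c * (1 - B s) = 1 := by rw [← hv]; exact v.inv_mul
  have hcv : (1 - B s) * c = 1 := by rw [← hv]; exact v.mul_inv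
  -- B commutes with c
  have hBc : B s * c = c * B s := by
    have h1 : c * (B s * (1 - B s)) * c = c * ((1 - B s) * B s) * c := by
      noncomm_ring
    calc B s * c = (c * (1 - B s)) * (B s * c) := by rw [hvc, one_mul]
      _ = c * ((1 - B s) * B s) * c := by noncomm_ring
      _ = c * (B s * (1 - B s)) * c := by rw [← h1]
      _ = (c * B s) * ((1 - B s) * c) := by noncomm_ring
      _ = c * B s := by rw [hcv, mul_one]
  -- key identity : D * a = c * D + c * P s * a
  have hDa : D * a = c * D + c * P s * a := by
    have h1 : D * (1 + B s) = (1 - B s) * D - P s := by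
      rw [mul_add, mul_one, hcomm s]; noncomm_ring
    have h2 : D = ((1 - B s) * D - P s) * a := by
      calc D = (D * (1 + B s)) * a := by rw [mul_assoc, hau, mul_one]
        _ = ((1 - B s) * D - P s) * a := by rw [h1]
    calc D * a = (c * (1 - B s)) * (D * a) := by rw [hvc, one_mul]
      _ = c * ((1 - B s) * D - P s) * a + c * P s * a := by noncomm_ring
      _ = c * (((1 - B s) * D - P s) * a) + c * P s * a := by noncomm_ring
      _ = c * D + c * P s * a := by rw [← h2]
  -- c = 1 + c * B s
  have hc1 : c = 1 + c * B s := by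
    have := hvc
    rw [mul_sub, mul_one] at this
    rw [← this]; noncomm_ring
  calc Ring.inverse (1 - (B s) ^ 2) * (B s) * D
        + Ring.inverse (1 - (B s) ^ 2) * P s * Ring.inverse (1 + B s)
      = c * a * B s * D + c * a * P s * a := by rw [hinv2, hinva]
    _ = a * c * B s * D + a * c * P s * a := by
        have huv : u * v = v * u := by
          ext; rw [Units.val_mul, Units.val_mul, hu, hv]; noncomm_ring
        have hac : c * a = a * c := by
          have h := congrArg (fun w : Aˣ => ((w⁻¹ : Aˣ) : A)) huv
          simpa [mul_inv_rev] using h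
        rw [hac]
    _ = -(a * (D * B s) * a) := by
        have e0 : -(a * (D * B s) * a) = a * (B s * (D * a)) + a * (P s * a) := by
          rw [hcomm s]; noncomm_ring
        rw [e0, hDa]
        have h3 : B s * (c * D + c * P s * a)
            = c * B s * D + c * B s * (P s * a) := by
          calc B s * (c * D + c * P s * a)
              = (B s * c) * D + (B s * c) * (P s * a) := by noncomm_ring
            _ = (c * B s) * D + (c * B s) * (P s * a) := by rw [hBc]
        rw [h3]
        have h4 : a * c * P s * a = a * (c * B s * (P s * a)) + a * (P s * a) := by
          conv_lhs => rw [hc1]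
          noncomm_ring
        rw [h4]; noncomm_ring
end
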